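/- Let q ≥ 2 and K a finite field with q elements. For π ⊢ [n], let J_π ⊆ U_n(K) be the set of upper unitriangular matrices A such that A_{ij} ≠ 0 for (i,j) ∈ D(π), A_{ij} = 0 for (i,j) ∈ reg(π)∖D(π), and A_{ij} arbitrary for (i,j) ∈ Sing(π). Then |J_π| = (q−1)^{d(π)} · q^{2dim(π)−2d(π)−crs(π)}. -/

import Mathlib

open scoped BigOperators
open Finset Classical

/-- Two indices lie in the same block of the set partition `P` of `[n]`. -/
def SameBlock {n : ℕ} (P : Finpartition (Finset.univ : Finset (Fin n))) (i j : Fin n) : Prop :=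
  ∃ B ∈ P.parts, i ∈ B ∧ j ∈ B

/-- `(i,j)` is an arc of `P`: same block, `i < j`, no element of that block strictly between. -/
def IsArc {n : ℕ} (P : Finpartition (Finset.univ : Finset (Fin n))) (i j : Fin n) : Prop :=
  i < j ∧ SameBlock P i j ∧ ∀ k : Fin n, i < k → k < j → ¬ SameBlock P i k

/-- The set of arcs `D(π)`. -/
noncomputable def arcs {n : ℕ} (P : Finpartition (Finset.univ : Finset (Fin n))) :
    Finset (Fin n × Fin n) :=
  Finset.univ.filter (fun p => IsArc P p.1 p.2)

/-- `d(π)`, the number of arcs. -/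
noncomputable def dP {n : ℕ} (P : Finpartition (Finset.univ : Finset (Fin n))) : ℕ :=
  (arcs P).card

/-- `dim(π) = Σ_{(i,j) ∈ D(π)} (j - i)`. -/
noncomputable def dimP {n : ℕ} (P : Finpartition (Finset.univ : Finset (Fin n))) : ℕ :=
  ∑ p ∈ arcs P, (p.2.val - p.1.val)

/-- `crs(π)`, the number of crossings, i.e. pairs of arcs `(i,j), (k,l)` with `i<k<j<l`. -/
noncomputable def crsP {n : ℕ} (P : Finpartition (Finset.univ : Finset (Fin n))) : ℕ :=
  (((arcs P) ×ˢ (arcs P)).filter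
    (fun q => q.1.1 < q.2.1 ∧ q.2.1 < q.1.2 ∧ q.1.2 < q.2.2)).card

/-- `(i,j)` is a `π`-singular pair. -/
def SingularPair {n : ℕ} (P : Finpartition (Finset.univ : Finset (Fin n))) (i j : Fin n) : Prop :=
  i < j ∧ ((∃ k : Fin n, k < i ∧ IsArc P k j) ∨ (∃ l : Fin n, j < l ∧ IsArc P i l))

/-- `(i,j)` is a `π`-regular pair. -/
def RegularPair {n : ℕ} (P : Finpartition (Finset.univ : Finset (Fin n))) (i j : Fin n) : Prop :=
  i < j ∧ ¬ ((∃ k : Fin n, k < i ∧ IsArc P k j) ∨ (∃ l : Fin n, j < l ∧ IsArc P i l))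

/-- The set `Sing(π)` of singular pairs. -/
noncomputable def singP {n : ℕ} (P : Finpartition (Finset.univ : Finset (Fin n))) :
    Finset (Fin n × Fin n) :=
  Finset.univ.filter (fun p => SingularPair P p.1 p.2)

/-- The set `reg(π)` of regular pairs. -/
noncomputable def regP {n : ℕ} (P : Finpartition (Finset.univ : Finset (Fin n))) :
    Finset (Fin n × Fin n) :=
  Finset.univ.filter (fun p => RegularPair P p.1 p.2)

/-- The set `J_π` of upper unitriangular matrices with nonzero entries at arcs,
zero entries at regular non-arc pairs, arbitrary entries at singular pairs. -/
noncomputable def Jset {n : ℕ} (K : Type*) [Field K] [Fintype K] [DecidableEq K]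
    (P : Finpartition (Finset.univ : Finset (Fin n))) :
    Finset (Matrix (Fin n) (Fin n) K) :=
  Finset.univ.filter (fun A =>
    (∀ i : Fin n, A i i = 1) ∧
    (∀ i j : Fin n, j < i → A i j = 0) ∧
    (∀ p ∈ arcs P, A p.1 p.2 ≠ 0) ∧
    (∀ i j : Fin n, RegularPair P i j → ¬ IsArc P i j → A i j = 0))

section Aux

variable {n : ℕ} (P : Finpartition (Finset.univ : Finset (Fin n)))

lemma my_mem_arcs {p : Fin n × Fin n} : p ∈ arcs P ↔ IsArc P p.1 p.2 := by
  simp [arcs]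

lemma my_mem_singP {p : Fin n × Fin n} : p ∈ singP P ↔ SingularPair P p.1 p.2 := by
  simp [singP]

lemma my_sameBlock_trans {i j k : Fin n} (h1 : SameBlock P i j) (h2 : SameBlock P k j) :
    SameBlock P i k := by
  obtain ⟨B, hB, hi, hj⟩ := h1
  obtain ⟨C, hC, hk, hj'⟩ := h2
  have hBC : B = C := P.eq_of_mem_parts hB hC hj hj'
  exact ⟨B, hB, hi, hBC ▸ hk⟩

lemma my_arc_right_unique {k k' j : Fin n} (h : IsArc P k j) (h' : IsArc P k' j) : k = k' := by
  by_contra hne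
  rcases lt_or_gt_of_ne hne with hlt | hlt
  · exact h.2.2 k' hlt h'.1 (my_sameBlock_trans P h.2.1 h'.2.1)
  · exact h'.2.2 k hlt h.1 (my_sameBlock_trans P h'.2.1 h.2.1)

lemma my_arc_left_unique {i l l' : Fin n} (h : IsArc P i l) (h' : IsArc P i l') : l = l' := by
  by_contra hne
  rcases lt_or_gt_of_ne hne with hlt | hlt
  · exact h'.2.2 l h.1 hlt h.2.1
  · exact h.2.2 l' h'.1 hlt h'.2.1

lemma my_arc_not_singular {i j : Fin n} (h : IsArc P i j) : ¬ SingularPair P i j := by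
  rintro ⟨hij, ⟨k, hk, hkj⟩ | ⟨l, hl, hil⟩⟩
  · exact absurd (my_arc_right_unique P hkj h) (ne_of_lt hk)
  · exact absurd (my_arc_left_unique P h hil) (ne_of_lt hl)

/-- Left-singular pairs. -/
noncomputable def mySL : Finset (Fin n × Fin n) :=
  Finset.univ.filter (fun p => p.1 < p.2 ∧ ∃ k : Fin n, k < p.1 ∧ IsArc P k p.2)

/-- Right-singular pairs. -/
noncomputable def mySR : Finset (Fin n × Fin n) :=
  Finset.univ.filter (fun p => p.1 < p.2 ∧ ∃ l : Fin n, p.2 < l ∧ IsArc P p.1 l)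

lemma my_singP_eq : singP P = mySL P ∪ mySR P := by
  ext p
  simp only [my_mem_singP, mySL, mySR, SingularPair, Finset.mem_filter, Finset.mem_univ, true_and,
    Finset.mem_union]
  constructor
  · rintro ⟨hp, h | h⟩
    · exact Or.inl ⟨hp, h⟩
    · exact Or.inr ⟨hp, h⟩
  · rintro (⟨hp, h⟩ | ⟨hp, h⟩)
    · exact ⟨hp, Or.inl h⟩
    · exact ⟨hp, Or.inr h⟩

lemma my_SL_eq : mySL P =
    (arcs P).biUnion (fun a => (Finset.Ioo a.1 a.2).image (fun m => (m, a.2))) := by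
  ext p
  simp only [mySL, Finset.mem_filter, Finset.mem_univ, true_and, Finset.mem_biUnion,
    Finset.mem_image, Finset.mem_Ioo, my_mem_arcs]
  constructor
  · rintro ⟨hp, k, hk, harc⟩
    exact ⟨(k, p.2), harc, p.1, ⟨hk, hp⟩, rfl⟩
  · rintro ⟨a, harc, m, ⟨h1, h2⟩, rfl⟩
    exact ⟨h2, a.1, h1, harc⟩

lemma my_SR_eq : mySR P =
    (arcs P).biUnion (fun a => (Finset.Ioo a.1 a.2).image (fun m => (a.1, m))) := by
  ext p
  simp only [mySR, Finset.mem_filter, Finset.mem_univ, true_and, Finset.mem_biUnion,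
    Finset.mem_image, Finset.mem_Ioo, my_mem_arcs]
  constructor
  · rintro ⟨hp, l, hl, harc⟩
    exact ⟨(p.1, l), harc, p.2, ⟨hp, hl⟩, rfl⟩
  · rintro ⟨a, harc, m, ⟨h1, h2⟩, rfl⟩
    exact ⟨h1, a.2, h2, harc⟩

lemma my_card_SL : (mySL P).card = ∑ a ∈ arcs P, ((a.2 : ℕ) - a.1 - 1) := by
  rw [my_SL_eq, Finset.card_biUnion]
  · refine Finset.sum_congr rfl fun a _ => ?_
    rw [Finset.card_image_of_injective _ (fun x y h => (Prod.mk.injEq _ _ _ _ ▸ h).1),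
      Fin.card_Ioo]
  · intro a ha b hb hab
    simp only [Finset.disjoint_left, Finset.mem_image, Finset.mem_Ioo]
    rintro p ⟨m, hm, rfl⟩ ⟨m', hm', he⟩
    have h2 : a.2 = b.2 := (Prod.mk.injEq _ _ _ _ ▸ he).2.symm
    have h1 : a.1 = b.1 :=
      my_arc_right_unique P ((my_mem_arcs P).1 ha) (h2 ▸ (my_mem_arcs P).1 hb)
    exact hab (Prod.ext h1 h2)

lemma my_card_SR : (mySR P).card = ∑ a ∈ arcs P, ((a.2 : ℕ) - a.1 - 1) := by
  rw [my_SR_eq, Finset.card_biUnion]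
  · refine Finset.sum_congr rfl fun a _ => ?_
    rw [Finset.card_image_of_injective _ (fun x y h => (Prod.mk.injEq _ _ _ _ ▸ h).2),
      Fin.card_Ioo]
  · intro a ha b hb hab
    simp only [Finset.disjoint_left, Finset.mem_image, Finset.mem_Ioo]
    rintro p ⟨m, hm, rfl⟩ ⟨m', hm', he⟩
    have h1 : a.1 = b.1 := (Prod.mk.injEq _ _ _ _ ▸ he).1.symm
    have h2 : a.2 = b.2 :=
      my_arc_left_unique P ((my_mem_arcs P).1 ha) (h1 ▸ (my_mem_arcs P).1 hb)
    exact hab (Prod.ext h1 h2)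

lemma my_crs_eq_inter : crsP P = (mySL P ∩ mySR P).card := by
  have himg : mySL P ∩ mySR P =
      (((arcs P) ×ˢ (arcs P)).filter
        (fun q => q.1.1 < q.2.1 ∧ q.2.1 < q.1.2 ∧ q.1.2 < q.2.2)).image
        (fun q => (q.2.1, q.1.2)) := by
    ext p
    simp only [Finset.mem_inter, mySL, mySR, Finset.mem_filter, Finset.mem_univ, true_and,
      Finset.mem_image, Finset.mem_product, my_mem_arcs]
    constructor
    · rintro ⟨⟨hp, k, hk, hkj⟩, ⟨_, l, hl, hil⟩⟩
      exact ⟨((k, p.2), (p.1, l)), ⟨⟨hkj, hil⟩, hk, hp, hl⟩, rfl⟩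
    · rintro ⟨⟨a, b⟩, ⟨⟨ha, hb⟩, h1, h2, h3⟩, rfl⟩
      exact ⟨⟨h2, a.1, h1, ha⟩, h2, b.2, h3, hb⟩
  rw [himg, Finset.card_image_of_injOn, crsP]
  rintro ⟨a, b⟩ hq ⟨a', b'⟩ hq' he
  simp only [Finset.mem_coe, Finset.mem_filter, Finset.mem_product, my_mem_arcs] at hq hq'
  obtain ⟨he1, he2⟩ := Prod.mk.injEq _ _ _ _ ▸ he
  have ha2 : a.2 = a'.2 := he2
  have hb1 : b.1 = b'.1 := he1
  have ha1 : a.1 = a'.1 := my_arc_right_unique P hq.1.1 (ha2 ▸ hq'.1.1)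
  have hb2 : b.2 = b'.2 := my_arc_left_unique P hq.1.2 (hb1 ▸ hq'.1.2)
  exact Prod.ext (Prod.ext ha1 ha2) (Prod.ext hb1 hb2)

lemma my_dim_eq : dimP P = (∑ a ∈ arcs P, ((a.2 : ℕ) - a.1 - 1)) + dP P := by
  rw [dimP, dP, Finset.card_eq_sum_ones, ← Finset.sum_add_distrib]
  refine Finset.sum_congr rfl fun a ha => ?_
  have h : (a.1 : ℕ) < a.2 := ((my_mem_arcs P).1 ha).1
  omega

lemma my_exponent : 2 * dimP P - 2 * dP P - crsP P = (singP P).card := by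
  have h1 := Finset.card_union_add_card_inter (mySL P) (mySR P)
  have h2 := my_card_SL P
  have h3 := my_card_SR P
  have h4 := my_crs_eq_inter P
  have h5 := my_dim_eq P
  have h6 : (singP P).card = (mySL P ∪ mySR P).card := by rw [my_singP_eq]
  omega

end Aux

section Count

variable {n : ℕ} (K : Type*) [Field K] [Fintype K] [DecidableEq K]
variable (P : Finpartition (Finset.univ : Finset (Fin n)))

/-- The matrix built from prescribed arc values and singular values. -/
noncomputable def myMat (f : {p // p ∈ arcs P} → {x : K // x ≠ 0})
    (g : {p // p ∈ singP P} → K) : Matrix (Fin n) (Fin n) K :=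
  fun i j => if h : (i, j) ∈ arcs P then (f ⟨(i, j), h⟩ : K)
    else if h2 : (i, j) ∈ singP P then g ⟨(i, j), h2⟩
    else if i = j then 1 else 0

lemma my_mem_Jset {A : Matrix (Fin n) (Fin n) K} : A ∈ Jset K P ↔
    ((∀ i : Fin n, A i i = 1) ∧ (∀ i j : Fin n, j < i → A i j = 0) ∧
    (∀ p ∈ arcs P, A p.1 p.2 ≠ 0) ∧
    (∀ i j : Fin n, RegularPair P i j → ¬ IsArc P i j → A i j = 0)) := by
  simp [Jset]

lemma myMat_mem (f : {p // p ∈ arcs P} → {x : K // x ≠ 0})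
    (g : {p // p ∈ singP P} → K) : myMat K P f g ∈ Jset K P := by
  rw [my_mem_Jset]
  refine ⟨?_, ?_, ?_, ?_⟩
  · intro i
    have h1 : (i, i) ∉ arcs P := fun h => lt_irrefl i ((my_mem_arcs P).1 h).1
    have h2 : (i, i) ∉ singP P := fun h => lt_irrefl i ((my_mem_singP P).1 h).1
    simp [myMat, h1, h2]
  · intro i j hji
    have h1 : (i, j) ∉ arcs P := fun h => absurd ((my_mem_arcs P).1 h).1 (asymm hji)
    have h2 : (i, j) ∉ singP P := fun h => absurd ((my_mem_singP P).1 h).1 (asymm hji)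
    have h3 : i ≠ j := ne_of_gt hji
    simp [myMat, h1, h2, h3]
  · intro p hp
    have hp' : (p.1, p.2) ∈ arcs P := by rwa [Prod.mk.eta]
    simp only [myMat, dif_pos hp']
    exact (f ⟨(p.1, p.2), hp'⟩).2
  · intro i j hreg hnarc
    have h1 : (i, j) ∉ arcs P := fun h => hnarc ((my_mem_arcs P).1 h)
    have h2 : (i, j) ∉ singP P := fun h => hreg.2 ((my_mem_singP P).1 h).2
    have h3 : i ≠ j := ne_of_lt hreg.1
    simp [myMat, h1, h2, h3]

noncomputable def myEquiv : {A // A ∈ Jset K P} ≃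
    (({p // p ∈ arcs P} → {x : K // x ≠ 0}) × ({p // p ∈ singP P} → K)) where
  toFun A := (fun p => ⟨A.1 p.1.1 p.1.2, ((my_mem_Jset K P).1 A.2).2.2.1 p.1 p.2⟩,
              fun p => A.1 p.1.1 p.1.2)
  invFun fg := ⟨myMat K P fg.1 fg.2, myMat_mem K P fg.1 fg.2⟩
  left_inv A := by
    obtain ⟨A, hA⟩ := A
    obtain ⟨hd, hlow, harc, hreg⟩ := (my_mem_Jset K P).1 hA
    refine Subtype.ext ?_
    funext i j
    show myMat K P _ _ i j = A i j
    simp only [myMat]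
    split_ifs with h1 h2 h3
    · rfl
    · rfl
    · subst h3; exact (hd i).symm
    · rcases lt_trichotomy i j with hlt | heq | hgt
      · have hns : ¬ SingularPair P i j := fun hs => h2 ((my_mem_singP P).2 hs)
        have hr : RegularPair P i j := ⟨hlt, fun hx => hns ⟨hlt, hx⟩⟩
        have hna : ¬ IsArc P i j := fun hx => h1 ((my_mem_arcs P).2 hx)
        exact (hreg i j hr hna).symm
      · exact absurd heq h3
      · exact (hlow i j hgt).symm
  right_inv fg := by
    obtain ⟨f, g⟩ := fg
    refine Prod.ext ?_ ?_
    · funext p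
      obtain ⟨⟨i, j⟩, hp⟩ := p
      refine Subtype.ext ?_
      show myMat K P _ _ i j = (f ⟨(i, j), hp⟩ : K)
      simp only [myMat, dif_pos hp]
    · funext p
      obtain ⟨⟨i, j⟩, hp⟩ := p
      have h1 : (i, j) ∉ arcs P := fun h =>
        my_arc_not_singular P ((my_mem_arcs P).1 h) ((my_mem_singP P).1 hp)
      show myMat K P _ _ i j = g ⟨(i, j), hp⟩
      simp only [myMat, dif_neg h1, dif_pos hp]

lemma my_card_Jset : (Jset K P).card =
    (Fintype.card K - 1) ^ dP P * Fintype.card K ^ (singP P).card := by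
  rw [← Fintype.card_coe (Jset K P), Fintype.card_congr (myEquiv K P), Fintype.card_prod,
    Fintype.card_fun, Fintype.card_fun]
  have h0 : Fintype.card {x : K // x ≠ 0} = Fintype.card K - 1 := by
    have h := Fintype.card_subtype_compl (fun x : K => x = 0)
    rw [Fintype.card_subtype_eq (0 : K)] at h
    simpa using h
  rw [h0, Fintype.card_coe, Fintype.card_coe, dP]

end Count

/-- `|J_π| = (q−1)^{d(π)} · q^{2dim(π)−2d(π)−crs(π)}`. -/
theorem stmt12 (n q : ℕ) (hq : 2 ≤ q) (K : Type*) [Field K] [Fintype K] [DecidableEq K]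
    (hK : Fintype.card K = q) (P : Finpartition (Finset.univ : Finset (Fin n))) :
    (Jset K P).card = (q - 1) ^ (dP P) * q ^ (2 * dimP P - 2 * dP P - crsP P) := by
  rw [my_card_Jset K P, hK, my_exponent P]
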